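/- arXiv:math/0309034 — 3 statements merged into one kernel-verified Lean document; each statement's English description precedes it below -/
import Mathlib

section
/- Suppose for every m ∈ ℕ there exists x_m ∈ N₀ (a compact subset of ℝᵏ) such that the solution of x' = v(x) + ε(t,x), x(t₀) = x_m passes through int N₁, ..., int N_m at times t₀ < t₁ᵐ < ⋯ < t_mᵐ, with the gaps t_iᵐ - t_{i-1}ᵐ uniformly bounded (above by M and below by δ' > 0) independently of m and i. Assume solutions depend continuously on initial conditions and exist for all time. Then there exists x₀ ∈ N₀ and a strictly increasing sequence t₀ < t₁ < t₂ < ⋯ such that the solution through (t₀, x₀) satisfies x(t_i) ∈ N_i for all i ≥ 1, where N_i are the closures of the given compact sets. -/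
open Set Metric

/-- Compactness/diagonal argument: if for every `m` there is an initial point `xₘ ∈ N₀`
whose solution of `x' = v(x) + ε(t,x)`, `x(t₀) = xₘ` visits `int N₁, …, int Nₘ` at times
`t₀ < t₁ᵐ < ⋯ < tₘᵐ` with gaps uniformly bounded in `[δ', M]`, then there is a point
`x₀ ∈ N₀` and a strictly increasing sequence of times `t₀ < t₁ < ⋯` whose solution
visits every `Nᵢ`.  Here `φ t T y` is the (globally defined) solution at time `t` with
initial condition `x(T) = y`, depending continuously on all its arguments. -/
theorem stmt10 {k : ℕ}
    (v : EuclideanSpace ℝ (Fin k) → EuclideanSpace ℝ (Fin k))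
    (ε : ℝ × EuclideanSpace ℝ (Fin k) → EuclideanSpace ℝ (Fin k))
    (hv : ContDiff ℝ 1 v) (hε : Continuous ε) (hεbd : ∃ C, ∀ p, ‖ε p‖ ≤ C)
    (φ : ℝ → ℝ → EuclideanSpace ℝ (Fin k) → EuclideanSpace ℝ (Fin k))
    (hφcont : Continuous fun p : ℝ × ℝ × EuclideanSpace ℝ (Fin k) => φ p.1 p.2.1 p.2.2)
    (hφinit : ∀ T y, φ T T y = y)
    (hφode : ∀ T y t, HasDerivAt (fun τ => φ τ T y) (v (φ t T y) + ε (t, φ t T y)) t)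
    (N : ℕ → Set (EuclideanSpace ℝ (Fin k))) (hN : ∀ i, IsCompact (N i))
    (t₀ δ' M : ℝ) (hδ' : 0 < δ')
    (hfin : ∀ m : ℕ, ∃ x ∈ N 0, ∃ t : Fin (m + 1) → ℝ, t 0 = t₀ ∧
      (∀ i : Fin m, δ' ≤ t i.succ - t i.castSucc ∧ t i.succ - t i.castSucc ≤ M) ∧
      ∀ i : Fin m, φ (t i.succ) t₀ x ∈ interior (N (i.succ : ℕ))) :
    ∃ x₀ ∈ N 0, ∃ t : ℕ → ℝ, t 0 = t₀ ∧ StrictMono t ∧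
      ∀ i : ℕ, 1 ≤ i → φ (t i) t₀ x₀ ∈ N i := by
  classical
  choose x hx T hT0 hTgap hTmem using hfin
  have hδM : δ' ≤ M := le_trans (hTgap 1 0).1 (hTgap 1 0).2
  set s : ℕ → ℕ → ℝ := fun m i =>
    if h : i ≤ m then T m ⟨i, by omega⟩ else T m (Fin.last m) + ((i - m : ℕ) : ℝ) * δ'
    with hs
  have hs0 : ∀ m, s m 0 = t₀ := by
    intro m
    simp only [hs]
    rw [dif_pos (Nat.zero_le m)]
    exact hT0 m
  have hgap : ∀ m i, δ' ≤ s m (i + 1) - s m i := by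
    intro m i
    by_cases h1 : i + 1 ≤ m
    · have h2 : i ≤ m := by omega
      simp only [hs, dif_pos h1, dif_pos h2]
      exact (hTgap m ⟨i, by omega⟩).1
    · by_cases h2 : i ≤ m
      · have hi : i = m := by omega
        subst hi
        simp only [hs, dif_neg h1, dif_pos le_rfl]
        have hlast : (⟨i, by omega⟩ : Fin (i + 1)) = Fin.last i := rfl
        have h3 : (i + 1 - i : ℕ) = 1 := by omega
        rw [hlast, h3]
        simp
      · have h3 : (i + 1 - m : ℕ) = (i - m : ℕ) + 1 := by omega
        simp only [hs, dif_neg h1, dif_neg h2, h3]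
        push_cast
        ring_nf
        nlinarith [hδ'.le]
  have hgapM : ∀ m i, s m (i + 1) - s m i ≤ M := by
    intro m i
    by_cases h1 : i + 1 ≤ m
    · have h2 : i ≤ m := by omega
      simp only [hs, dif_pos h1, dif_pos h2]
      exact (hTgap m ⟨i, by omega⟩).2
    · by_cases h2 : i ≤ m
      · have hi : i = m := by omega
        subst hi
        simp only [hs, dif_neg h1, dif_pos le_rfl]
        have hlast : (⟨i, by omega⟩ : Fin (i + 1)) = Fin.last i := rfl
        have h3 : (i + 1 - i : ℕ) = 1 := by omega
        rw [hlast, h3]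
        simpa using hδM
      · have h3 : (i + 1 - m : ℕ) = (i - m : ℕ) + 1 := by omega
        simp only [hs, dif_neg h1, dif_neg h2, h3]
        push_cast
        nlinarith [hδ'.le]
  have hlb : ∀ (m i : ℕ), t₀ + (i : ℝ) * δ' ≤ s m i := by
    intro m i
    induction i with
    | zero => simp [hs0]
    | succ n ih =>
      have := hgap m n
      push_cast
      nlinarith
  have hub : ∀ (m i : ℕ), s m i ≤ t₀ + (i : ℝ) * M := by
    intro m i
    induction i with
    | zero => simp [hs0]
    | succ n ih =>
      have := hgapM m n
      push_cast
      nlinarith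
  have hvisit : ∀ m i, 1 ≤ i → i ≤ m → φ (s m i) t₀ (x m) ∈ interior (N i) := by
    intro m i h1 h2
    have hmem := hTmem m ⟨i - 1, by omega⟩
    have hsucc : (⟨i - 1, by omega⟩ : Fin m).succ = ⟨i, by omega⟩ := by
      ext
      simp [Fin.succ]
      omega
    rw [hsucc] at hmem
    simp only [hs, dif_pos h2]
    exact hmem
  set K : Set (EuclideanSpace ℝ (Fin k) × (ℕ → ℝ)) :=
    (N 0) ×ˢ (Set.univ.pi fun i : ℕ => Icc (t₀ + (i : ℝ) * δ') (t₀ + (i : ℝ) * M)) with hK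
  have hKc : IsCompact K := (hN 0).prod (isCompact_univ_pi fun i => isCompact_Icc)
  have hmemK : ∀ m, (x m, s m) ∈ K := fun m =>
    ⟨hx m, fun i _ => ⟨hlb m i, hub m i⟩⟩
  obtain ⟨⟨x₀, sl⟩, hps, ψ, hψ, htend⟩ := hKc.tendsto_subseq hmemK
  have htx : Filter.Tendsto (fun n => x (ψ n)) Filter.atTop (nhds x₀) :=
    (continuous_fst.tendsto _).comp htend
  have hts : ∀ i, Filter.Tendsto (fun n => s (ψ n) i) Filter.atTop (nhds (sl i)) := by
    intro i
    exact (((continuous_apply i).comp continuous_snd).tendsto _).comp htend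
  refine ⟨x₀, hps.1, sl, ?_, ?_, ?_⟩
  · have h0 : Filter.Tendsto (fun n => s (ψ n) 0) Filter.atTop (nhds t₀) := by
      simpa [hs0] using (tendsto_const_nhds : Filter.Tendsto (fun _ : ℕ => t₀) _ _)
    exact tendsto_nhds_unique (hts 0) h0
  · apply strictMono_nat_of_lt_succ
    intro n
    have hd : Filter.Tendsto (fun j => s (ψ j) (n + 1) - s (ψ j) n) Filter.atTop
        (nhds (sl (n + 1) - sl n)) := (hts (n + 1)).sub (hts n)
    have : δ' ≤ sl (n + 1) - sl n :=
      ge_of_tendsto' hd fun j => hgap (ψ j) n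
    linarith
  · intro i hi
    have htφ : Filter.Tendsto (fun n => φ (s (ψ n) i) t₀ (x (ψ n))) Filter.atTop
        (nhds (φ (sl i) t₀ x₀)) := by
      have hpt : Filter.Tendsto (fun n => ((s (ψ n) i, t₀, x (ψ n)) :
          ℝ × ℝ × EuclideanSpace ℝ (Fin k))) Filter.atTop (nhds (sl i, t₀, x₀)) :=
        (hts i).prodMk_nhds (tendsto_const_nhds.prodMk_nhds htx)
      exact (hφcont.tendsto _).comp hpt
    refine (hN i).isClosed.mem_of_tendsto htφ ?_
    filter_upwards [Filter.eventually_ge_atTop i] with n hn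
    exact interior_subset (hvisit (ψ n) i hi (le_trans hn (hψ.le_apply)))
end

section
/- Let F : XN → (ℝᵏ × ℝ)^{n+1} be the map F((x₀,t₀),...,(x_n,t_n)) = ((x₀ - g(x_n), t₀), (x₁ - f₁^{t₀}(x₀), t₁ - σ₁(x₀,t₀)), ..., (x_n - f_n^{t_{n-1}}(x_{n-1}), t_n - σ_n(x_{n-1},t_{n-1}))). If F(x) = 0 for some x = ((x₀,t₀),...,(x_n,t_n)) in the interior of XN = (N₀ × [-1,1]) × (N₁ × I₁) × ⋯ × (N_n × I_n), and each f_i^T(y) equals the value at time σ_i(y,T) of the solution of x' = v(x) + ε(t,x) with x(T) = y, then t₀ = 0, the times satisfy 0 = t₀ < t₁ < ⋯ < t_n (assuming σ_i(y,T) > T for all y, T), and the solution x(·) of the ODE with x(t₀) = x₀ satisfies x(t_i) ∈ int N_i for i = 1, ..., n. -/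
open Set Metric

/-- Extracting the trajectory conclusion from a zero of `F`.  Here `φ t T y` is the
solution of `x' = v(x) + ε(t,x)` with `x(T) = y` (with the flow/cocycle property),
`σ i y T > T` are the return times and `f i T y = φ (σ i y T) T y` the Poincaré maps.
If `F(x) = 0` at a point of the interior of `XN` (encoded componentwise by the
hypotheses `hF0, hFt0, hFx, hFt` together with `hx`), then `t₀ = 0`, the times are
strictly increasing and the solution through `(t₀, x₀)` satisfies `x(tᵢ) ∈ int Nᵢ`. -/
theorem stmt12 {k n : ℕ}
    (v : EuclideanSpace ℝ (Fin k) → EuclideanSpace ℝ (Fin k))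
    (ε : ℝ × EuclideanSpace ℝ (Fin k) → EuclideanSpace ℝ (Fin k))
    (hv : ContDiff ℝ 1 v) (hε : Continuous ε)
    (φ : ℝ → ℝ → EuclideanSpace ℝ (Fin k) → EuclideanSpace ℝ (Fin k))
    (hφinit : ∀ T y, φ T T y = y)
    (hφode : ∀ T y t, HasDerivAt (fun τ => φ τ T y) (v (φ t T y) + ε (t, φ t T y)) t)
    (hφflow : ∀ a b c y, φ c b (φ b a y) = φ c a y)
    (σ : Fin n → EuclideanSpace ℝ (Fin k) → ℝ → ℝ)
    (hσ : ∀ i y T, T < σ i y T)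
    (f : Fin n → ℝ → EuclideanSpace ℝ (Fin k) → EuclideanSpace ℝ (Fin k))
    (hf : ∀ i T y, f i T y = φ (σ i y T) T y)
    (g : EuclideanSpace ℝ (Fin k) → EuclideanSpace ℝ (Fin k))
    (N : Fin (n + 1) → Set (EuclideanSpace ℝ (Fin k)))
    (x : Fin (n + 1) → EuclideanSpace ℝ (Fin k)) (t : Fin (n + 1) → ℝ)
    (hx : ∀ i, x i ∈ interior (N i))
    (hF0 : x 0 - g (x (Fin.last n)) = 0)
    (hFt0 : t 0 = 0)
    (hFx : ∀ i : Fin n, x i.succ - f i (t i.castSucc) (x i.castSucc) = 0)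
    (hFt : ∀ i : Fin n, t i.succ - σ i (x i.castSucc) (t i.castSucc) = 0) :
    t 0 = 0 ∧ StrictMono t ∧
      ∀ i : Fin n, φ (t i.succ) (t 0) (x 0) ∈ interior (N i.succ) := by
  have ht : ∀ i : Fin n, t i.succ = σ i (x i.castSucc) (t i.castSucc) := fun i =>
    sub_eq_zero.mp (hFt i)
  have hstep : ∀ i : Fin n, x i.succ = φ (t i.succ) (t i.castSucc) (x i.castSucc) := by
    intro i
    rw [sub_eq_zero.mp (hFx i), hf, ← ht i]
  have key : ∀ i : Fin (n + 1), φ (t i) (t 0) (x 0) = x i := by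
    intro i
    induction i using Fin.induction with
    | zero => exact hφinit _ _
    | succ i ih =>
      rw [← hφflow (t 0) (t i.castSucc) (t i.succ) (x 0), ih, ← hstep i]
  refine ⟨hFt0, ?_, fun i => ?_⟩
  · refine Fin.strictMono_iff_lt_succ.mpr fun i => ?_
    rw [ht i]; exact hσ i _ _
  · rw [key i.succ]; exact hx i.succ
end

section
/- Suppose for every δ > 0 and every T ∈ ℝ the perturbed Poincaré map f^{λ,T} (for the equation x' = v(x) + (1/2 - λ)ε(t + T, x), λ ∈ [0, 1/2]) satisfies the covering N f^{λ,T}-covers M, with f^{1/2,T} = f the unperturbed Poincaré map, and suppose (λ, T, x) ↦ f_c^{λ,T}(x) is continuous. If additionally N f-covers M via a homotopy h satisfying conditions 1, 2.1/2.2 of the covering definition, then there exists a continuous homotopy H : [0,1] × ℝ × N_c → ℝᵘ × ℝˢ with H(0,T,x) = f_c^{0,T}(x), H(1,T,(p,q)) = (Ap, 0), H([0,1] × {T} × N_c⁻) ∩ M_c = ∅ and H([0,1] × {T} × N_c) ∩ M_c⁺ = ∅ for every T. -/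
open Set Metric

/-- Support of the standard unit h-set in `ℝᵘ × ℝˢ`. -/
def unitHSet (u s : ℕ) : Set (EuclideanSpace ℝ (Fin u) × EuclideanSpace ℝ (Fin s)) :=
  Metric.closedBall 0 1 ×ˢ Metric.closedBall 0 1

/-- Exit set `N_c⁻`. -/
def unitHSetMinus (u s : ℕ) :
    Set (EuclideanSpace ℝ (Fin u) × EuclideanSpace ℝ (Fin s)) :=
  Metric.sphere 0 1 ×ˢ Metric.closedBall 0 1

/-- Entry set `N_c⁺`. -/
def unitHSetPlus (u s : ℕ) :
    Set (EuclideanSpace ℝ (Fin u) × EuclideanSpace ℝ (Fin s)) :=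
  Metric.closedBall 0 1 ×ˢ Metric.sphere 0 1

/-- The covering relation `N g-covers M` in the unit coordinates: a continuous homotopy
from `g` to `(p,q) ↦ (Ap, 0)` (`A` linear, expanding the unit sphere outside the closed
ball) avoiding `M_c` on `[0,1] × N_c⁻` and avoiding `M_c⁺` on `[0,1] × N_c`. -/
def UnitCovers (u s : ℕ)
    (g : EuclideanSpace ℝ (Fin u) × EuclideanSpace ℝ (Fin s) →
      EuclideanSpace ℝ (Fin u) × EuclideanSpace ℝ (Fin s)) : Prop :=
  ∃ h : ℝ → EuclideanSpace ℝ (Fin u) × EuclideanSpace ℝ (Fin s) →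
      EuclideanSpace ℝ (Fin u) × EuclideanSpace ℝ (Fin s),
    ContinuousOn (fun p : ℝ × _ => h p.1 p.2) (Set.Icc (0 : ℝ) 1 ×ˢ unitHSet u s) ∧
    (∀ x ∈ unitHSet u s, h 0 x = g x) ∧
    (∀ l ∈ Set.Icc (0 : ℝ) 1, ∀ x ∈ unitHSetMinus u s, h l x ∉ unitHSet u s) ∧
    (∀ l ∈ Set.Icc (0 : ℝ) 1, ∀ x ∈ unitHSet u s, h l x ∉ unitHSetPlus u s) ∧
    (0 < u → ∃ A : EuclideanSpace ℝ (Fin u) →ₗ[ℝ] EuclideanSpace ℝ (Fin u),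
      (∀ p, ‖p‖ = 1 → 1 < ‖A p‖) ∧ ∀ x ∈ unitHSet u s, h 1 x = (A x.1, 0)) ∧
    (u = 0 → ∀ x ∈ unitHSet u s, h 1 x = 0)

/-- Lemma 5: uniform-in-`T` covering homotopy for non-autonomous perturbations.  Here
`F l T` is the (unit-coordinate) Poincaré map `f_c^{λ,T}` of the perturbed equation
`x' = v(x) + (1/2 - λ)ε(t + T, x)` for `λ ∈ [0,1/2]`, continuous jointly in
`(λ, T, x)`, each covering `M`; `F (1/2) T = f` is the unperturbed Poincaré map, which
covers `M` via a homotopy `h` ending at `(p,q) ↦ (A p, 0)`.  Then there is a continuous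
homotopy `H(λ,T,x)` with `H(0,T,·) = F 0 T`, `H(1,T,(p,q)) = (A p, 0)` and the
exit/entry avoidance conditions, uniformly for every `T`. -/
theorem stmt19 {u s : ℕ} (hu : 0 < u)
    (F : ℝ → ℝ → EuclideanSpace ℝ (Fin u) × EuclideanSpace ℝ (Fin s) →
      EuclideanSpace ℝ (Fin u) × EuclideanSpace ℝ (Fin s))
    (hFc : ContinuousOn
      (fun p : ℝ × ℝ × (EuclideanSpace ℝ (Fin u) × EuclideanSpace ℝ (Fin s)) =>
        F p.1 p.2.1 p.2.2)
      (Set.Icc (0 : ℝ) (1/2) ×ˢ (Set.univ ×ˢ unitHSet u s)))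
    (hFcov : ∀ l ∈ Set.Icc (0 : ℝ) (1/2), ∀ T : ℝ, UnitCovers u s (F l T))
    (f : EuclideanSpace ℝ (Fin u) × EuclideanSpace ℝ (Fin s) →
      EuclideanSpace ℝ (Fin u) × EuclideanSpace ℝ (Fin s))
    (hf12 : ∀ T : ℝ, ∀ x, F (1/2) T x = f x)
    (h : ℝ → EuclideanSpace ℝ (Fin u) × EuclideanSpace ℝ (Fin s) →
      EuclideanSpace ℝ (Fin u) × EuclideanSpace ℝ (Fin s))
    (A : EuclideanSpace ℝ (Fin u) →ₗ[ℝ] EuclideanSpace ℝ (Fin u))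
    (hA : ∀ p, ‖p‖ = 1 → 1 < ‖A p‖)
    (hhc : ContinuousOn (fun p : ℝ × _ => h p.1 p.2) (Set.Icc (0 : ℝ) 1 ×ˢ unitHSet u s))
    (hh0 : ∀ x ∈ unitHSet u s, h 0 x = f x)
    (hh1 : ∀ x ∈ unitHSet u s, h 1 x = (A x.1, 0))
    (hhm : ∀ l ∈ Set.Icc (0 : ℝ) 1, ∀ x ∈ unitHSetMinus u s, h l x ∉ unitHSet u s)
    (hhp : ∀ l ∈ Set.Icc (0 : ℝ) 1, ∀ x ∈ unitHSet u s, h l x ∉ unitHSetPlus u s) :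
    ∃ H : ℝ → ℝ → EuclideanSpace ℝ (Fin u) × EuclideanSpace ℝ (Fin s) →
        EuclideanSpace ℝ (Fin u) × EuclideanSpace ℝ (Fin s),
      ContinuousOn
        (fun p : ℝ × ℝ × (EuclideanSpace ℝ (Fin u) × EuclideanSpace ℝ (Fin s)) =>
          H p.1 p.2.1 p.2.2)
        (Set.Icc (0 : ℝ) 1 ×ˢ (Set.univ ×ˢ unitHSet u s)) ∧
      (∀ T : ℝ, ∀ x ∈ unitHSet u s, H 0 T x = F 0 T x) ∧
      (∀ T : ℝ, ∀ x ∈ unitHSet u s, H 1 T x = (A x.1, 0)) ∧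
      (∀ T : ℝ, ∀ l ∈ Set.Icc (0 : ℝ) 1, ∀ x ∈ unitHSetMinus u s,
        H l T x ∉ unitHSet u s) ∧
      (∀ T : ℝ, ∀ l ∈ Set.Icc (0 : ℝ) 1, ∀ x ∈ unitHSet u s,
        H l T x ∉ unitHSetPlus u s) := by
  classical
  have hMsub : unitHSetMinus u s ⊆ unitHSet u s := by
    intro x hx
    exact ⟨Metric.sphere_subset_closedBall hx.1, hx.2⟩
  refine ⟨fun l T x => if l ≤ 1/2 then F (min l (1/2)) T x else h (max (2*l-1) 0) x,
    ?_, ?_, ?_, ?_, ?_⟩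
  · -- continuity
    set D : Set (ℝ × ℝ × (EuclideanSpace ℝ (Fin u) × EuclideanSpace ℝ (Fin s))) :=
      Set.Icc (0 : ℝ) 1 ×ˢ (Set.univ ×ˢ unitHSet u s) with hD
    have hΦ : ContinuousOn
        (fun p : ℝ × ℝ × (EuclideanSpace ℝ (Fin u) × EuclideanSpace ℝ (Fin s)) =>
          F (min p.1 (1/2)) p.2.1 p.2.2) D := by
      have hg0 : Continuous
          (fun p : ℝ × ℝ × (EuclideanSpace ℝ (Fin u) × EuclideanSpace ℝ (Fin s)) =>
            ((min p.1 (1/2), p.2) : ℝ × ℝ × _)) := by fun_prop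
      refine hFc.comp hg0.continuousOn ?_
      rintro ⟨l, T, x⟩ ⟨hl, -, hx⟩
      exact ⟨⟨le_min hl.1 (by norm_num), min_le_right _ _⟩, trivial, hx⟩
    have hΨ : ContinuousOn
        (fun p : ℝ × ℝ × (EuclideanSpace ℝ (Fin u) × EuclideanSpace ℝ (Fin s)) =>
          h (max (2*p.1-1) 0) p.2.2) D := by
      have hg1 : Continuous
          (fun p : ℝ × ℝ × (EuclideanSpace ℝ (Fin u) × EuclideanSpace ℝ (Fin s)) =>
            ((max (2*p.1-1) 0, p.2.2) : ℝ × _)) := by fun_prop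
      refine hhc.comp hg1.continuousOn ?_
      rintro ⟨l, T, x⟩ ⟨hl, -, hx⟩
      refine ⟨⟨le_max_right _ _, max_le (by linarith [hl.2]) (by norm_num)⟩, hx⟩
    refine ContinuousOn.if ?_ (hΦ.mono Set.inter_subset_left)
      (hΨ.mono Set.inter_subset_left)
    rintro ⟨l, T, x⟩ ⟨hmem, hfr⟩
    have hl12 : l = 1/2 := by
      have := frontier_le_subset_eq (f := fun p : ℝ × ℝ ×
          (EuclideanSpace ℝ (Fin u) × EuclideanSpace ℝ (Fin s)) => p.1)
        (g := fun _ => (1/2 : ℝ)) (by fun_prop) continuous_const hfr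
      exact this
    obtain ⟨hl, -, hx⟩ := hmem
    simp only [hl12]
    rw [min_self, hf12 T x, show max (2*(1/2 : ℝ)-1) 0 = 0 by norm_num, hh0 x hx]
  · intro T x hx
    simp only
    rw [if_pos (by norm_num : (0:ℝ) ≤ 1/2), min_eq_left (by norm_num : (0:ℝ) ≤ 1/2)]
  · intro T x hx
    simp only
    rw [if_neg (by norm_num : ¬ (1:ℝ) ≤ 1/2),
      show max (2*(1:ℝ)-1) 0 = 1 by norm_num, hh1 x hx]
  · intro T l hl x hx
    simp only
    by_cases hle : l ≤ 1/2
    · rw [if_pos hle, min_eq_left hle]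
      obtain ⟨h', -, h'0, h'm, -, -, -⟩ := hFcov l ⟨hl.1, hle⟩ T
      have := h'm 0 ⟨le_refl 0, by norm_num⟩ x hx
      rwa [h'0 x (hMsub hx)] at this
    · rw [if_neg hle]
      exact hhm _ ⟨le_max_right _ _, max_le (by linarith [hl.2]) (by norm_num)⟩ x hx
  · intro T l hl x hx
    simp only
    by_cases hle : l ≤ 1/2
    · rw [if_pos hle, min_eq_left hle]
      obtain ⟨h', -, h'0, -, h'p, -, -⟩ := hFcov l ⟨hl.1, hle⟩ T
      have := h'p 0 ⟨le_refl 0, by norm_num⟩ x hx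
      rwa [h'0 x hx] at this
    · rw [if_neg hle]
      exact hhp _ ⟨le_max_right _ _, max_le (by linarith [hl.2]) (by norm_num)⟩ x hx
end
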